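/- For all x, y, z, w ∈ ℂ and all i, j ∈ ℕ, the series ∑_{k=0}^∞ (1/k!)·m_{i,k}(x,y)·m_{k,j}(z,w) converges absolutely and its sum equals m_{i,j}(x+z, y+w)·exp(z·y). -/

import Mathlib

/-- The polynomial `m_{n,m}(x,y) = ∑_{j=0}^{min(n,m)} (n choose j)(m choose j) j! x^{n-j} y^{m-j}`. -/
def mPoly {R : Type*} [CommSemiring R] (n m : ℕ) (x y : R) : R :=
  ∑ j ∈ Finset.range (min n m + 1),
    (n.choose j : R) * (m.choose j : R) * (Nat.factorial j : R) * x ^ (n - j) * y ^ (m - j)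


open Finset

lemma mPoly_range {R : Type*} [CommSemiring R] (n m : ℕ) (x y : R) :
    mPoly n m x y = ∑ j ∈ Finset.range (n+1),
      (n.choose j : R) * (m.choose j : R) * (j.factorial : R) * x ^ (n-j) * y ^ (m-j) := by
  rw [mPoly]
  apply Finset.sum_subset
  · intro k hk; simp only [Finset.mem_range] at *; omega
  · intro k hk hk'
    simp only [Finset.mem_range] at hk hk'
    have : m < k := by omega
    simp [Nat.choose_eq_zero_of_lt this]

lemma mPoly_comm {R : Type*} [CommSemiring R] (n m : ℕ) (x y : R) :
    mPoly n m x y = mPoly m n y x := by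
  rw [mPoly, mPoly, min_comm]
  exact Finset.sum_congr rfl fun k _ => by ring

lemma chooseE (c r : ℕ) : ((r+c).choose c : ℂ) / (r+c).factorial
    = 1 / (c.factorial * r.factorial) := by
  have h : (r + c).choose c * (r.factorial * c.factorial) = (r+c).factorial := by
    have := Nat.add_choose_mul_factorial_mul_factorial r c
    rw [← this]; ring
  rw [div_eq_div_iff]
  · push_cast [← h]; ring
  · exact_mod_cast (r+c).factorial_pos.ne'
  · exact_mod_cast Nat.mul_ne_zero c.factorial_pos.ne' r.factorial_pos.ne'

lemma expTsum (t : ℂ) : Complex.exp t = ∑' n : ℕ, t^n / n.factorial := by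
  rw [Complex.exp_eq_exp_ℂ, NormedSpace.exp_eq_tsum_div]

lemma normE (c : ℕ) (t : ℂ) :
    Summable (fun r : ℕ => ‖(r.choose c : ℂ) * t^r / r.factorial‖) := by
  rw [← summable_nat_add_iff c]
  have : ∀ r : ℕ, ‖((r+c).choose c : ℂ) * t^(r+c) / (r+c).factorial‖
      = (‖t‖^c / c.factorial) * (‖t‖^r / r.factorial) := by
    intro r
    have : ((r+c).choose c : ℂ) * t^(r+c) / (r+c).factorial
        = t^(r+c) * (1 / (c.factorial * r.factorial)) := by
      rw [mul_comm, mul_div_assoc, chooseE]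
    rw [this]
    rw [norm_mul, norm_pow, norm_div, norm_one, norm_mul, Complex.norm_natCast,
      Complex.norm_natCast, pow_add]
    ring
  exact Summable.congr ((Real.summable_pow_div_factorial ‖t‖).mul_left _) (fun r => (this r).symm)

lemma tsumE (c : ℕ) (t : ℂ) :
    ∑' r : ℕ, (r.choose c : ℂ) * t^r / r.factorial
      = t^c / c.factorial * Complex.exp t := by
  have hs : Summable (fun r : ℕ => (r.choose c : ℂ) * t^r / r.factorial) :=
    (normE c t).of_norm
  rw [← hs.sum_add_tsum_nat_add c]
  have h0 : ∑ r ∈ range c, (r.choose c : ℂ) * t^r / r.factorial = 0 := by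
    apply Finset.sum_eq_zero
    intro r hr
    rw [Finset.mem_range] at hr
    simp [Nat.choose_eq_zero_of_lt hr]
  rw [h0, zero_add]
  have : ∀ r : ℕ, ((r+c).choose c : ℂ) * t^(r+c) / (r+c).factorial
      = t^c / c.factorial * (t^r / r.factorial) := by
    intro r
    rw [mul_comm, mul_div_assoc, chooseE, pow_add]
    field_simp
  rw [tsum_congr this, tsum_mul_left, expTsum]

noncomputable def Fser (a b : ℕ) (y z : ℂ) (k : ℕ) : ℂ :=
  (k.choose a : ℂ) * (k.choose b : ℂ) / k.factorial * y^(k-a) * z^(k-b)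

lemma Fser_symm (a b : ℕ) (y z : ℂ) : Fser a b y z = Fser b a z y := by
  funext k; unfold Fser; ring

lemma Fser_shift {a b : ℕ} (hab : a ≤ b) (y z : ℂ) (r : ℕ) :
    Fser a b y z (r + b) = ∑ c ∈ range (a+1),
      (b.choose (a-c) : ℂ) * ((r.choose c : ℂ) * (y*z)^r / r.factorial)
        * (y^(b-a) / b.factorial) := by
  unfold Fser
  have h2 : (((r+b).choose a : ℕ) : ℂ)
      = ∑ c ∈ range (a+1), (r.choose c : ℂ) * (b.choose (a-c) : ℂ) := by
    rw [Nat.add_choose_eq, Finset.Nat.sum_antidiagonal_eq_sum_range_succ_mk]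
    push_cast
    rfl
  have h3 : r + b - a = (b-a) + r := by omega
  have h4 : r + b - b = r := by omega
  rw [h3, h4, pow_add, mul_div_assoc ((r+b).choose a : ℂ), chooseE b r, h2,
    Finset.sum_mul, Finset.sum_mul, Finset.sum_mul]
  refine Finset.sum_congr rfl fun c _ => ?_
  rw [mul_pow]
  field_simp

lemma Fser_norm_summable_of_le {a b : ℕ} (hab : a ≤ b) (y z : ℂ) :
    Summable (fun k => ‖Fser a b y z k‖) := by
  rw [← summable_nat_add_iff b]
  have hg : Summable (fun r : ℕ => ∑ c ∈ range (a+1),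
      ‖(b.choose (a-c) : ℂ)‖ * ‖(r.choose c : ℂ) * (y*z)^r / r.factorial‖
        * ‖y^(b-a) / (b.factorial : ℂ)‖) := by
    apply summable_sum
    intro c _
    exact ((normE c (y*z)).mul_left _).mul_right _
  apply Summable.of_nonneg_of_le (fun r => norm_nonneg _) ?_ hg
  intro r
  rw [Fser_shift hab]
  refine (norm_sum_le _ _).trans (le_of_eq (Finset.sum_congr rfl fun c _ => ?_))
  rw [norm_mul, norm_mul]

lemma Fser_norm_summable (a b : ℕ) (y z : ℂ) :
    Summable (fun k => ‖Fser a b y z k‖) := by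
  rcases le_total a b with h | h
  · exact Fser_norm_summable_of_le h y z
  · rw [Fser_symm]; exact Fser_norm_summable_of_le h z y

lemma Fser_tsum_of_le {a b : ℕ} (hab : a ≤ b) (y z : ℂ) :
    ∑' k, Fser a b y z k
      = Complex.exp (y*z) * mPoly a b z y / (a.factorial * b.factorial) := by
  have hs : Summable (Fser a b y z) := (Fser_norm_summable a b y z).of_norm
  rw [← hs.sum_add_tsum_nat_add b]
  have h0 : ∑ k ∈ range b, Fser a b y z k = 0 := by
    apply Finset.sum_eq_zero
    intro k hk
    rw [Finset.mem_range] at hk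
    unfold Fser
    simp [Nat.choose_eq_zero_of_lt hk]
  rw [h0, zero_add, tsum_congr (Fser_shift hab y z)]
  rw [Summable.tsum_finsetSum (fun c _ => (((normE c (y*z)).of_norm.mul_left _).mul_right _))]
  have step : ∀ c ∈ range (a+1),
      ∑' r : ℕ, (b.choose (a-c) : ℂ) * ((r.choose c : ℂ) * (y*z)^r / r.factorial)
          * (y^(b-a) / b.factorial)
      = (b.choose (a-c) : ℂ) * ((y*z)^c / c.factorial * Complex.exp (y*z))
          * (y^(b-a) / b.factorial) := by
    intro c _
    rw [tsum_mul_right, tsum_mul_left, tsumE]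
  rw [Finset.sum_congr rfl step]
  rw [mPoly_range, mul_comm (Complex.exp (y*z)), Finset.sum_mul, Finset.sum_div,
    ← Finset.sum_range_reflect]
  refine Finset.sum_congr rfl fun c hc => ?_
  rw [Finset.mem_range] at hc
  have hca : c ≤ a := by omega
  have e1 : a + 1 - 1 - c = a - c := by omega
  have e3 : b - c = (b - a) + (a - c) := by omega
  have e2 : a - (a - c) = c := by omega
  rw [e1, e2, e3, pow_add, mul_pow]
  have hnat : (a.choose c : ℂ) * (c.factorial : ℂ) * ((a-c).factorial : ℂ)
      = (a.factorial : ℂ) := by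
    exact_mod_cast congrArg (Nat.cast (R := ℂ))
      (Nat.choose_mul_factorial_mul_factorial hca)
  have hc0 : ((a-c).factorial : ℂ) ≠ 0 := by exact_mod_cast (a-c).factorial_pos.ne'
  have ha0 : (a.factorial : ℂ) ≠ 0 := by exact_mod_cast a.factorial_pos.ne'
  have hb0 : (b.factorial : ℂ) ≠ 0 := by exact_mod_cast b.factorial_pos.ne'
  have hac0 : (a.choose c : ℂ) ≠ 0 := by exact_mod_cast (Nat.choose_pos hca).ne'
  have hcf0 : (c.factorial : ℂ) ≠ 0 := by exact_mod_cast c.factorial_pos.ne'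
  rw [← hnat]
  field_simp

lemma Fser_tsum (a b : ℕ) (y z : ℂ) :
    ∑' k, Fser a b y z k
      = Complex.exp (y*z) * mPoly a b z y / (a.factorial * b.factorial) := by
  rcases le_total a b with h | h
  · exact Fser_tsum_of_le h y z
  · rw [Fser_symm, Fser_tsum_of_le h z y, mul_comm z y, mul_comm (b.factorial : ℂ),
      mPoly_comm b a y z]

lemma chuP (i d : ℕ) (x z : ℂ) :
    ∑ a ∈ range (i+1), (i.choose a : ℂ) * (a.choose d : ℂ) * x^(i-a) * z^(a-d)
      = (i.choose d : ℂ) * (x+z)^(i-d) := by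
  rcases le_or_gt d i with hd | hd
  · rw [range_eq_Ico, ← Finset.sum_Ico_consecutive _ (Nat.zero_le d) (by omega : d ≤ i+1)]
    have h0 : ∑ a ∈ Finset.Ico 0 d, (i.choose a : ℂ) * (a.choose d : ℂ) * x^(i-a) * z^(a-d)
        = 0 := by
      apply Finset.sum_eq_zero
      intro a ha
      rw [Finset.mem_Ico] at ha
      simp [Nat.choose_eq_zero_of_lt ha.2]
    rw [h0, zero_add, Finset.sum_Ico_eq_sum_range]
    have hn : i + 1 - d = (i - d) + 1 := by omega
    rw [hn]
    have hterm : ∀ p ∈ range ((i-d)+1),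
        (i.choose (d+p) : ℂ) * ((d+p).choose d : ℂ) * x^(i-(d+p)) * z^(d+p-d)
        = (i.choose d : ℂ) * ((i-d).choose p : ℂ) * x^(i-d-p) * z^p := by
      intro p hp
      rw [Finset.mem_range] at hp
      have h1 : i.choose (d+p) * (d+p).choose d = i.choose d * (i-d).choose p := by
        have := Nat.choose_mul (n := i) (show d ≤ d + p by omega)
        simpa using this
      have h2 : i - (d+p) = i - d - p := by omega
      have h3 : d + p - d = p := by omega
      rw [h2, h3, ← Nat.cast_mul, h1]
      push_cast
      ring
    rw [Finset.sum_congr rfl hterm]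
    rw [add_comm x z, add_pow]
    rw [Finset.mul_sum]
    refine Finset.sum_congr rfl fun p hp => ?_
    ring
  · rw [Nat.choose_eq_zero_of_lt hd]
    rw [Finset.sum_eq_zero, Nat.cast_zero, zero_mul]
    intro a ha
    rw [Finset.mem_range] at ha
    rw [Nat.choose_eq_zero_of_lt (by omega : a < d)]
    simp

lemma mPoly_range_of_le {R : Type*} [CommSemiring R] {n N : ℕ} (h : n ≤ N) (m : ℕ) (x y : R) :
    mPoly n m x y = ∑ d ∈ Finset.range (N+1),
      (n.choose d : R) * (m.choose d : R) * (d.factorial : R) * x ^ (n-d) * y ^ (m-d) := by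
  rw [mPoly_range]
  apply Finset.sum_subset
  · intro k hk; simp only [Finset.mem_range] at *; omega
  · intro k hk hk'
    simp only [Finset.mem_range] at hk hk'
    have : n < k := by omega
    simp [Nat.choose_eq_zero_of_lt this]

lemma bigB (i j : ℕ) (x z y w : ℂ) :
    ∑ a ∈ range (i+1), ∑ b ∈ range (j+1),
      (i.choose a : ℂ) * (j.choose b : ℂ) * x^(i-a) * w^(j-b) * mPoly a b z y
      = mPoly i j (x+z) (y+w) := by
  calc
    ∑ a ∈ range (i+1), ∑ b ∈ range (j+1),
        (i.choose a : ℂ) * (j.choose b : ℂ) * x^(i-a) * w^(j-b) * mPoly a b z y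
      = ∑ a ∈ range (i+1), ∑ d ∈ range (i+1), ∑ b ∈ range (j+1),
          ((i.choose a : ℂ) * (a.choose d : ℂ) * x^(i-a) * z^(a-d))
            * ((j.choose b : ℂ) * (b.choose d : ℂ) * w^(j-b) * y^(b-d)) * d.factorial := by
        refine Finset.sum_congr rfl fun a ha => ?_
        rw [Finset.mem_range] at ha
        rw [← Finset.sum_comm]
        refine Finset.sum_congr rfl fun b hb => ?_
        rw [mPoly_range_of_le (show a ≤ i by omega) b z y, Finset.mul_sum]
        exact Finset.sum_congr rfl fun d _ => by ring
    _ = ∑ d ∈ range (i+1), (∑ a ∈ range (i+1),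
            (i.choose a : ℂ) * (a.choose d : ℂ) * x^(i-a) * z^(a-d))
          * (∑ b ∈ range (j+1),
            (j.choose b : ℂ) * (b.choose d : ℂ) * w^(j-b) * y^(b-d)) * d.factorial := by
        rw [Finset.sum_comm]
        refine Finset.sum_congr rfl fun d _ => ?_
        rw [Finset.sum_mul_sum, Finset.sum_mul]
        exact Finset.sum_congr rfl fun a _ => by rw [Finset.sum_mul]
    _ = mPoly i j (x+z) (y+w) := by
        rw [mPoly_range]
        refine Finset.sum_congr rfl fun d _ => ?_
        rw [chuP i d x z, chuP j d w y, add_comm w y]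
        ring

/-- For all `x, y, z, w ∈ ℂ` and `i, j ∈ ℕ`, the series
`∑_{k=0}^∞ (1/k!)·m_{i,k}(x,y)·m_{k,j}(z,w)` converges absolutely and its sum equals
`m_{i,j}(x+z, y+w)·exp(z·y)`. -/
theorem stmt0 (x y z w : ℂ) (i j : ℕ) :
    Summable (fun k : ℕ => ‖(1 / (Nat.factorial k : ℂ)) * mPoly i k x y * mPoly k j z w‖) ∧
    ∑' k : ℕ, (1 / (Nat.factorial k : ℂ)) * mPoly i k x y * mPoly k j z w
      = mPoly i j (x + z) (y + w) * Complex.exp (z * y) := by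
  set Cst : ℕ → ℕ → ℂ := fun a b =>
    (i.choose a : ℂ) * a.factorial * x^(i-a) * ((j.choose b : ℂ) * b.factorial * w^(j-b))
    with hCst
  have term_eq : ∀ k : ℕ, (1 / (Nat.factorial k : ℂ)) * mPoly i k x y * mPoly k j z w
      = ∑ a ∈ range (i+1), ∑ b ∈ range (j+1), Cst a b * Fser a b y z k := by
    intro k
    rw [mPoly_range i k x y, mPoly_comm k j z w, mPoly_range j k w z]
    rw [mul_assoc, Finset.sum_mul_sum, Finset.mul_sum]
    refine Finset.sum_congr rfl fun a _ => ?_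
    rw [Finset.mul_sum]
    refine Finset.sum_congr rfl fun b _ => ?_
    rw [hCst]
    unfold Fser
    simp only [div_eq_mul_inv, one_div]
    ring
  constructor
  · have hg : Summable (fun k : ℕ => ∑ a ∈ range (i+1), ∑ b ∈ range (j+1),
        ‖Cst a b‖ * ‖Fser a b y z k‖) :=
      summable_sum fun a _ => summable_sum fun b _ => (Fser_norm_summable a b y z).mul_left _
    apply Summable.of_nonneg_of_le (fun _ => norm_nonneg _) ?_ hg
    intro k
    rw [term_eq k]
    refine (norm_sum_le _ _).trans (Finset.sum_le_sum fun a _ => ?_)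
    refine (norm_sum_le _ _).trans (le_of_eq (Finset.sum_congr rfl fun b _ => ?_))
    rw [norm_mul]
  · rw [tsum_congr term_eq,
      Summable.tsum_finsetSum (fun a _ => summable_sum fun b _ =>
        ((Fser_norm_summable a b y z).of_norm.mul_left _))]
    have h1 : ∀ a ∈ range (i+1),
        ∑' k, ∑ b ∈ range (j+1), Cst a b * Fser a b y z k
        = ∑ b ∈ range (j+1), Cst a b * (Complex.exp (y*z) * mPoly a b z y
            / (a.factorial * b.factorial)) := by
      intro a _
      rw [Summable.tsum_finsetSum (fun b _ => ((Fser_norm_summable a b y z).of_norm.mul_left _))]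
      exact Finset.sum_congr rfl fun b _ => by rw [tsum_mul_left, Fser_tsum]
    rw [Finset.sum_congr rfl h1]
    have h2 : ∀ a ∈ range (i+1), ∀ b ∈ range (j+1),
        Cst a b * (Complex.exp (y*z) * mPoly a b z y / (a.factorial * b.factorial))
        = ((i.choose a : ℂ) * (j.choose b : ℂ) * x^(i-a) * w^(j-b) * mPoly a b z y)
            * Complex.exp (z*y) := by
      intro a _ b _
      rw [hCst, mul_comm y z]
      have ha0 : (a.factorial : ℂ) ≠ 0 := by exact_mod_cast a.factorial_pos.ne'
      have hb0 : (b.factorial : ℂ) ≠ 0 := by exact_mod_cast b.factorial_pos.ne'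
      field_simp
    rw [Finset.sum_congr rfl (fun a ha => Finset.sum_congr rfl (h2 a ha))]
    simp only [← Finset.sum_mul]
    rw [bigB i j x z y w]
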